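/- Let f : ℂ → ℂ be entire with Taylor coefficients f_n satisfying Σ_{n≥0} |f_n|² (n!)² 2^{nq} < ∞ for every q ∈ ℕ. Then f is of exponential type zero, i.e., for every ε > 0 there exists C > 0 with |f(z)| ≤ C e^{ε|z|} for all z ∈ ℂ. -/

import Mathlib

/-- if the Taylor coefficients of an entire function satisfy
`Σ |fₙ|²(n!)²2^{nq} < ∞` for every `q`, then the function is of first order of growth
and minimal type (exponential type zero). -/
theorem stmt17 (c : ℕ → ℂ)
    (hsum : ∀ q : ℕ, Summable (fun n : ℕ => ‖c n‖ ^ 2 * (n.factorial : ℝ) ^ 2 * 2 ^ (n * q))) :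
    ∀ ε : ℝ, 0 < ε → ∃ C : ℝ, 0 < C ∧
      ∀ z : ℂ, ‖∑' n : ℕ, c n * z ^ n‖ ≤ C * Real.exp (ε * ‖z‖) := by
  intro ε hε
  -- choose q with (2^q)⁻¹ ≤ ε
  obtain ⟨q, hq⟩ : ∃ q : ℕ, 1 / ε ≤ 2 ^ q := by
    obtain ⟨q, hq⟩ := pow_unbounded_of_one_lt (1 / ε) (by norm_num : (1:ℝ) < 2)
    exact ⟨q, hq.le⟩
  have h2q : ((2:ℝ) ^ q)⁻¹ ≤ ε := by
    rw [inv_le_iff_one_le_mul₀ (by positivity)]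
    rw [div_le_iff₀ hε] at hq
    linarith
  set M := ∑' n : ℕ, ‖c n‖ ^ 2 * (n.factorial : ℝ) ^ 2 * 2 ^ (n * (2 * q)) with hM
  have hM0 : 0 ≤ M := tsum_nonneg fun n => by positivity
  have hbound : ∀ n : ℕ, ‖c n‖ * (n.factorial : ℝ) * 2 ^ (n * q) ≤ Real.sqrt M := by
    intro n
    have hle : ‖c n‖ ^ 2 * (n.factorial : ℝ) ^ 2 * 2 ^ (n * (2 * q)) ≤ M :=
      Summable.le_tsum (hsum (2 * q)) n (fun m _ => by positivity)
    have : (‖c n‖ * (n.factorial : ℝ) * 2 ^ (n * q)) ^ 2 ≤ M := by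
      calc (‖c n‖ * (n.factorial : ℝ) * 2 ^ (n * q)) ^ 2
          = ‖c n‖ ^ 2 * (n.factorial : ℝ) ^ 2 * 2 ^ (n * (2 * q)) := by
            rw [mul_pow, mul_pow, ← pow_mul]; ring_nf
        _ ≤ M := hle
    have := Real.sqrt_le_sqrt this
    rwa [Real.sqrt_sq (by positivity)] at this
  refine ⟨Real.sqrt M + 1, by positivity, fun z => ?_⟩
  have h1 : ∀ n : ℕ, ‖c n * z ^ n‖ ≤ Real.sqrt M * ((ε * ‖z‖) ^ n / n.factorial) := by
    intro n
    have hfac : (0:ℝ) < n.factorial := by positivity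
    have hc : ‖c n‖ ≤ Real.sqrt M / ((n.factorial : ℝ) * 2 ^ (n * q)) := by
      rw [le_div_iff₀ (by positivity)]
      calc ‖c n‖ * ((n.factorial : ℝ) * 2 ^ (n * q))
          = ‖c n‖ * (n.factorial : ℝ) * 2 ^ (n * q) := by ring
        _ ≤ Real.sqrt M := hbound n
    calc ‖c n * z ^ n‖ = ‖c n‖ * ‖z‖ ^ n := by rw [norm_mul, norm_pow]
      _ ≤ Real.sqrt M / ((n.factorial : ℝ) * 2 ^ (n * q)) * ‖z‖ ^ n := by
          exact mul_le_mul_of_nonneg_right hc (by positivity)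
      _ = Real.sqrt M * ((((2:ℝ) ^ q)⁻¹ * ‖z‖) ^ n / n.factorial) := by
          rw [mul_pow, ← inv_pow, ← pow_mul]
          field_simp
          ring_nf
          rw [mul_assoc (Real.sqrt M * ‖z‖ ^ n), ← mul_pow]; norm_num
      _ ≤ Real.sqrt M * ((ε * ‖z‖) ^ n / n.factorial) := by
          gcongr
  have hs : Summable fun n : ℕ => Real.sqrt M * ((ε * ‖z‖) ^ n / n.factorial) :=
    (Real.summable_pow_div_factorial (ε * ‖z‖)).mul_left _
  calc ‖∑' n : ℕ, c n * z ^ n‖ ≤ ∑' n : ℕ, Real.sqrt M * ((ε * ‖z‖) ^ n / n.factorial) :=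
        tsum_of_norm_bounded hs.hasSum h1
    _ = Real.sqrt M * Real.exp (ε * ‖z‖) := by
        rw [tsum_mul_left, Real.exp_eq_exp_ℝ, NormedSpace.exp_eq_tsum_div]
    _ ≤ (Real.sqrt M + 1) * Real.exp (ε * ‖z‖) := by
        have := Real.exp_pos (ε * ‖z‖)
        nlinarith [Real.sqrt_nonneg M]
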